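/- For every λ ∈ ℂ \ [−1,1], |tan(πβ(λ)/2)| < 1. -/

import Mathlib

/-- `β(λ) = (1/(2πi))·Log((λ+1)/(λ−1))`, with the principal branch of `Log`. -/
noncomputable def betaFn (lam : ℂ) : ℂ :=
  (1 / (2 * (Real.pi : ℂ) * Complex.I)) * Complex.log ((lam + 1) / (lam - 1))

/-- `|tan(πβ(λ)/2)| < 1` for every `λ ∈ ℂ \ [−1,1]`. -/
theorem tan_beta_lt_one (lam : ℂ)
    (hlam : lam ∉ (Complex.ofReal '' Set.Icc (-1 : ℝ) 1)) :
    ‖Complex.tan ((Real.pi : ℂ) * betaFn lam / 2)‖ < 1 := by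
  have hπ : (Real.pi : ℂ) ≠ 0 := by exact_mod_cast Real.pi_ne_zero
  have h1 : lam - 1 ≠ 0 := by
    intro h
    rw [sub_eq_zero] at h
    exact hlam ⟨1, by norm_num, by simp [h.symm]⟩
  have hm1 : lam + 1 ≠ 0 := by
    intro h
    have : lam = -1 := by linear_combination h
    exact hlam ⟨-1, by norm_num, by simp [this]⟩
  set w : ℂ := (lam + 1) / (lam - 1) with hw
  have hw0 : w ≠ 0 := div_ne_zero hm1 h1
  -- w is not a nonpositive real
  have hwreal : ¬ (w.re < 0 ∧ w.im = 0) := by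
    rintro ⟨hre, him⟩
    set t := w.re with ht
    have hwt : w = (t : ℂ) := by
      apply Complex.ext <;> simp [him, ht]
    have ht1 : (t : ℂ) - 1 ≠ 0 := by
      intro h
      rw [sub_eq_zero] at h
      have : t = 1 := by exact_mod_cast h
      linarith
    have hlameq : lam = (((t + 1) / (t - 1) : ℝ) : ℂ) := by
      have hweq : (t : ℂ) * (lam - 1) = lam + 1 := by
        rw [hw, div_eq_iff h1] at hwt
        linear_combination -hwt
      push_cast
      field_simp
      linear_combination hweq
    apply hlam
    refine ⟨(t + 1) / (t - 1), ⟨?_, ?_⟩, hlameq.symm⟩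
    · rw [le_div_iff_of_neg (by linarith : t - 1 < 0)]
      linarith
    · rw [div_le_iff_of_neg (by linarith : t - 1 < 0)]
      linarith
  have harg : |Complex.arg w| < Real.pi := by
    rcases lt_or_eq_of_le (Complex.abs_arg_le_pi w) with h | h
    · exact h
    · exfalso
      rcases abs_eq (le_of_lt Real.pi_pos) |>.mp h with h' | h'
      · exact hwreal ((Complex.arg_eq_pi_iff).mp h')
      · linarith [Complex.neg_pi_lt_arg w]
  set s : ℂ := Complex.exp (Complex.log w / 2) with hs
  have hsre : 0 < s.re := by
    rw [hs, Complex.exp_re]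
    apply mul_pos (Real.exp_pos _)
    apply Real.cos_pos_of_mem_Ioo
    constructor
    · simp [Complex.div_im, Complex.log_im]
      rw [abs_lt] at harg
      linarith [harg.1]
    · simp [Complex.div_im, Complex.log_im]
      rw [abs_lt] at harg
      linarith [harg.2]
  have hs1 : s + 1 ≠ 0 := by
    intro h
    have : (s + 1).re = 0 := by rw [h]; simp
    simp [Complex.add_re] at this
    linarith
  set z : ℂ := (Real.pi : ℂ) * betaFn lam / 2 with hz
  have hzI : z * Complex.I = Complex.log w / 4 := by
    rw [hz, betaFn]
    field_simp
    ring_nf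
    rw [hw]
    ring_nf
  set u : ℂ := Complex.exp (Complex.log w / 4) with hu
  have hu0 : u ≠ 0 := Complex.exp_ne_zero _
  have huI : Complex.exp (z * Complex.I) = u := by rw [hzI]
  have huI' : Complex.exp (-z * Complex.I) = u⁻¹ := by
    rw [neg_mul, hzI, ← Complex.exp_neg]
  have hu2 : u ^ 2 = s := by
    rw [hu, hs, ← Complex.exp_nat_mul]
    ring_nf
  have htan : Complex.tan z = (1 - s) * Complex.I / (s + 1) := by
    rw [Complex.tan_eq_sin_div_cos, Complex.sin, Complex.cos, huI, huI']
    rw [← hu2]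
    field_simp
  rw [htan, norm_div, norm_mul, Complex.norm_I, mul_one]
  rw [div_lt_one (norm_pos_iff.mpr hs1)]
  have h2 : Complex.normSq (1 - s) < Complex.normSq (s + 1) := by
    simp [Complex.normSq_apply, Complex.sub_re, Complex.sub_im, Complex.add_re, Complex.add_im]
    nlinarith
  rw [Complex.norm_def, Complex.norm_def]
  exact Real.sqrt_lt_sqrt (Complex.normSq_nonneg _) h2
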